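/- Let X be an n × p real matrix and A = XᵀX/n. Let I and J be disjoint subsets of {1,…,p}. Then ‖A_{I,J}‖₂ ≤ √((ρ₊(I) − ρ₋(I ∪ J))(ρ₊(J) − ρ₋(I ∪ J))), where A_{I,J} is the submatrix of A with rows indexed by I and columns indexed by J, and ‖A_{I,J}‖₂ = sup{|uᵀ A_{I,J} v| : ‖u‖₂ = ‖v‖₂ = 1} is the matrix operator 2-norm. -/

import Mathlib

open Matrix MeasureTheory ProbabilityTheory

noncomputable def norm2 {ι : Type*} [Fintype ι] (v : ι → ℝ) : ℝ :=
  Real.sqrt (∑ i, v i ^ 2)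

open scoped ComplexOrder in
/-- The positive semidefinite square root, as `Matrix.PosSemidef.sqrt` was defined in older Mathlib. -/
noncomputable def Matrix.PosSemidef.sqrt {n 𝕜 : Type*} [Fintype n] [RCLike 𝕜] [DecidableEq n]
    {A : Matrix n n 𝕜} (hA : A.PosSemidef) : Matrix n n 𝕜 :=
  hA.1.eigenvectorUnitary.1 * diagonal ((↑) ∘ (√·) ∘ hA.1.eigenvalues) *
    (star hA.1.eigenvectorUnitary : Matrix n n 𝕜)

open scoped Classical in
noncomputable def invSqrt {ι : Type*} [Fintype ι] [DecidableEq ι] (M : Matrix ι ι ℝ) :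
    Matrix ι ι ℝ :=
  if h : M.PosSemidef then h.sqrt⁻¹ else 0

def colSub {n p : ℕ} (X : Matrix (Fin n) (Fin p) ℝ) (F : Finset (Fin p)) :
    Matrix (Fin n) {i : Fin p // i ∈ F} ℝ :=
  Matrix.of fun r c => X r c.1

noncomputable def groupProj {n p : ℕ} (X : Matrix (Fin n) (Fin p) ℝ) (F : Finset (Fin p))
    (v : Fin n → ℝ) : ℝ :=
  norm2 ((invSqrt ((colSub X F)ᵀ * colSub X F)) *ᵥ ((colSub X F)ᵀ *ᵥ v))

def restr {p : ℕ} (F : Finset (Fin p)) (β : Fin p → ℝ) : Fin p → ℝ :=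
  fun i => if i ∈ F then β i else 0

/-- `G` is a partition of the index set into disjoint groups. -/
def IsPartition {p m : ℕ} (G : Fin m → Finset (Fin p)) : Prop :=
  (∀ j₁ j₂, j₁ ≠ j₂ → Disjoint (G j₁) (G j₂)) ∧ Finset.univ.biUnion G = Finset.univ

/-- `β` is `(g, k)` strongly group-sparse. -/
def SGS {p m : ℕ} (G : Fin m → Finset (Fin p)) (g k : ℕ) (β : Fin p → ℝ) : Prop :=
  ∃ S : Finset (Fin m), S.card ≤ g ∧ (S.biUnion G).card ≤ k ∧
    ∀ i, β i ≠ 0 → i ∈ S.biUnion G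

noncomputable def rhoMinusF {n p : ℕ} (X : Matrix (Fin n) (Fin p) ℝ) (F : Finset (Fin p)) : ℝ :=
  sInf {r : ℝ | ∃ β : Fin p → ℝ, β ≠ 0 ∧ (∀ i ∉ F, β i = 0) ∧
    r = norm2 (X *ᵥ β) ^ 2 / (n * norm2 β ^ 2)}

noncomputable def rhoPlusF {n p : ℕ} (X : Matrix (Fin n) (Fin p) ℝ) (F : Finset (Fin p)) : ℝ :=
  sSup {r : ℝ | ∃ β : Fin p → ℝ, β ≠ 0 ∧ (∀ i ∉ F, β i = 0) ∧
    r = norm2 (X *ᵥ β) ^ 2 / (n * norm2 β ^ 2)}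

noncomputable def rhoMinusN {n p m : ℕ} (X : Matrix (Fin n) (Fin p) ℝ)
    (G : Fin m → Finset (Fin p)) (s : ℕ) : ℝ :=
  sInf {r : ℝ | ∃ S : Finset (Fin m), (S.biUnion G).card ≤ s ∧ r = rhoMinusF X (S.biUnion G)}

noncomputable def rhoPlusN {n p m : ℕ} (X : Matrix (Fin n) (Fin p) ℝ)
    (G : Fin m → Finset (Fin p)) (s : ℕ) : ℝ :=
  sSup {r : ℝ | ∃ S : Finset (Fin m), (S.biUnion G).card ≤ s ∧ r = rhoPlusF X (S.biUnion G)}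

/-- The group Lasso objective. -/
noncomputable def glObj {n p m : ℕ} (X : Matrix (Fin n) (Fin p) ℝ)
    (G : Fin m → Finset (Fin p)) (lam : Fin m → ℝ) (y : Fin n → ℝ) (β : Fin p → ℝ) : ℝ :=
  (1 / (n : ℝ)) * norm2 (X *ᵥ β - y) ^ 2 + ∑ j, lam j * norm2 (restr (G j) β)

lemma norm2_nonneg' {ι : Type*} [Fintype ι] (v : ι → ℝ) : 0 ≤ norm2 v :=
  Real.sqrt_nonneg _

lemma norm2_sq' {ι : Type*} [Fintype ι] (v : ι → ℝ) : norm2 v ^ 2 = ∑ i, v i ^ 2 :=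
  Real.sq_sqrt (Finset.sum_nonneg fun _ _ => sq_nonneg _)

lemma sum_expand' {ι : Type*} [Fintype ι] (a b : ι → ℝ) (c d : ℝ) :
    ∑ i, (c * a i + d * b i) ^ 2 =
      c ^ 2 * (∑ i, a i ^ 2) + d ^ 2 * (∑ i, b i ^ 2) + 2 * c * d * (∑ i, a i * b i) := by
  rw [Finset.mul_sum, Finset.mul_sum, Finset.mul_sum, ← Finset.sum_add_distrib,
    ← Finset.sum_add_distrib]
  exact Finset.sum_congr rfl fun i _ => by ring

lemma key_abs' (a b c : ℝ) (ha : 0 ≤ a) (hb : 0 ≤ b)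
    (h : ∀ x y : ℝ, 0 < x → 0 < y → 2 * (x * y) * |c| ≤ x ^ 2 * a + y ^ 2 * b) :
    |c| ≤ Real.sqrt (a * b) := by
  have hsq : ∀ ε : ℝ, 0 < ε → c ^ 2 ≤ (a + ε) * (b + ε) := by
    intro ε hε
    have hx : (0:ℝ) < Real.sqrt (b + ε) := Real.sqrt_pos.2 (by linarith)
    have hy : (0:ℝ) < Real.sqrt (a + ε) := Real.sqrt_pos.2 (by linarith)
    have h1 := h _ _ hx hy
    have hx2 : Real.sqrt (b + ε) ^ 2 = b + ε := Real.sq_sqrt (by linarith)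
    have hy2 : Real.sqrt (a + ε) ^ 2 = a + ε := Real.sq_sqrt (by linarith)
    rw [hx2, hy2] at h1
    have hP : (0:ℝ) < (a + ε) * (b + ε) := by positivity
    have h2 : (2 * (Real.sqrt (b+ε) * Real.sqrt (a+ε)) * |c|) ^ 2
        ≤ ((b + ε) * a + (a + ε) * b) ^ 2 := by
      apply pow_le_pow_left₀ (by positivity) h1
    have h3 : 4 * ((a+ε)*(b+ε)) * c ^ 2 ≤ ((b + ε) * a + (a + ε) * b) ^ 2 := by
      have := h2
      rw [mul_pow, mul_pow, mul_pow, hx2, hy2, sq_abs] at this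
      nlinarith [this]
    have h4 : (b + ε) * a + (a + ε) * b ≤ 2 * ((a+ε)*(b+ε)) := by nlinarith
    have h5 : ((b + ε) * a + (a + ε) * b) ^ 2 ≤ (2 * ((a+ε)*(b+ε))) ^ 2 := by
      apply pow_le_pow_left₀ (by positivity) h4
    nlinarith [hP]
  have hc2 : c ^ 2 ≤ a * b := by
    by_contra h'
    push_neg at h'
    set d := c ^ 2 - a * b with hd
    have hd0 : 0 < d := by linarith
    set ε := min 1 (d / (2 * (a + b + 1))) with hε
    have hε0 : 0 < ε := by
      apply lt_min one_pos
      positivity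
    have hε1 : ε ≤ 1 := min_le_left _ _
    have hε2 : ε ≤ d / (2 * (a + b + 1)) := min_le_right _ _
    have := hsq ε hε0
    have h4 : ε * (2 * (a + b + 1)) ≤ d := by
      rw [← le_div_iff₀ (by positivity)]
      linarith [hε2]
    nlinarith [this, hε0, hε1, h4]
  calc |c| = Real.sqrt (c ^ 2) := by rw [Real.sqrt_sq_eq_abs]
    _ ≤ Real.sqrt (a * b) := Real.sqrt_le_sqrt hc2

lemma bddAbove_rho (n p : ℕ) (X : Matrix (Fin n) (Fin p) ℝ) (F : Finset (Fin p)) :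
    BddAbove {r : ℝ | ∃ β : Fin p → ℝ, β ≠ 0 ∧ (∀ i ∉ F, β i = 0) ∧
      r = norm2 (X *ᵥ β) ^ 2 / (n * norm2 β ^ 2)} := by
  use ∑ i, ∑ j, X i j ^ 2
  rintro r ⟨β, hβ, -, rfl⟩
  set C := ∑ i, ∑ j, X i j ^ 2 with hCdef
  have hC : 0 ≤ C := by positivity
  have hS : 0 < norm2 β ^ 2 := by
    rw [norm2_sq']
    obtain ⟨j, hj⟩ := Function.ne_iff.mp hβ
    have hj' : β j ≠ 0 := by simpa using hj
    exact Finset.sum_pos' (fun i _ => sq_nonneg _) ⟨j, Finset.mem_univ j, by positivity⟩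
  have hq : norm2 (X *ᵥ β) ^ 2 ≤ C * norm2 β ^ 2 := by
    rw [norm2_sq', norm2_sq']
    calc ∑ i, (X *ᵥ β) i ^ 2 = ∑ i, (∑ j, X i j * β j) ^ 2 := by
          simp [Matrix.mulVec, dotProduct]
      _ ≤ ∑ i, ((∑ j, X i j ^ 2) * ∑ j, β j ^ 2) :=
          Finset.sum_le_sum fun i _ => Finset.sum_mul_sq_le_sq_mul_sq _ _ _
      _ = C * ∑ j, β j ^ 2 := by rw [← Finset.sum_mul]
  rcases Nat.eq_zero_or_pos n with hn | hn
  · subst hn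
    have hz : norm2 (X *ᵥ β) ^ 2 = 0 := by rw [norm2_sq']; simp
    rw [hz]
    simpa using hC
  · have hn' : (1:ℝ) ≤ (n:ℝ) := by exact_mod_cast hn
    rw [div_le_iff₀ (by positivity)]
    calc norm2 (X *ᵥ β) ^ 2 ≤ C * norm2 β ^ 2 := hq
      _ ≤ C * ((n:ℝ) * norm2 β ^ 2) := by nlinarith

lemma bddBelow_rho (n p : ℕ) (X : Matrix (Fin n) (Fin p) ℝ) (F : Finset (Fin p)) :
    BddBelow {r : ℝ | ∃ β : Fin p → ℝ, β ≠ 0 ∧ (∀ i ∉ F, β i = 0) ∧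
      r = norm2 (X *ᵥ β) ^ 2 / (n * norm2 β ^ 2)} := by
  use 0
  rintro r ⟨β, -, -, rfl⟩
  have h1 : 0 ≤ norm2 (X *ᵥ β) ^ 2 := sq_nonneg _
  have h2 : 0 ≤ (n:ℝ) * norm2 β ^ 2 := by positivity
  exact div_nonneg h1 h2

set_option maxHeartbeats 1000000 in
/-- Lemma A2: for `A = XᵀX/n` and disjoint index sets `I, J`,
`‖A_{I,J}‖₂ ≤ √((ρ₊(I) - ρ₋(I ∪ J))(ρ₊(J) - ρ₋(I ∪ J)))`, stated via all unit vectors `u`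
supported on `I` and `v` supported on `J`. -/
theorem stmt_10 (n p : ℕ) (X : Matrix (Fin n) (Fin p) ℝ)
    (I J : Finset (Fin p)) (hIJ : Disjoint I J)
    (u v : Fin p → ℝ) (hu : ∀ i ∉ I, u i = 0) (hv : ∀ i ∉ J, v i = 0)
    (hun : norm2 u = 1) (hvn : norm2 v = 1) :
    |u ⬝ᵥ ((((1 : ℝ) / n) • (Xᵀ * X)) *ᵥ v)| ≤
      Real.sqrt ((rhoPlusF X I - rhoMinusF X (I ∪ J)) *
        (rhoPlusF X J - rhoMinusF X (I ∪ J))) := by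
  classical
  have hB : u ⬝ᵥ ((((1:ℝ)/n) • (Xᵀ * X)) *ᵥ v)
      = (1/(n:ℝ)) * ∑ i, (X *ᵥ u) i * (X *ᵥ v) i := by
    rw [Matrix.smul_mulVec, dotProduct_smul, ← Matrix.mulVec_mulVec,
      Matrix.dotProduct_mulVec, Matrix.vecMul_transpose]
    simp [dotProduct, smul_eq_mul]
  rcases Nat.eq_zero_or_pos n with hn0 | hn0
  · subst hn0
    rw [hB]
    norm_num [Real.sqrt_nonneg]
  have hnr : (0:ℝ) < (n:ℝ) := by exact_mod_cast hn0
  have hu0 : u ≠ 0 := by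
    intro h; rw [h] at hun; simp [norm2] at hun
  have hv0 : v ≠ 0 := by
    intro h; rw [h] at hvn; simp [norm2] at hvn
  have hun2 : ∑ i, u i ^ 2 = 1 := by rw [← norm2_sq', hun]; norm_num
  have hvn2 : ∑ i, v i ^ 2 = 1 := by rw [← norm2_sq', hvn]; norm_num
  have valu : (∑ i, (X *ᵥ u) i ^ 2) / (n:ℝ)
      = norm2 (X *ᵥ u) ^ 2 / ((n:ℝ) * norm2 u ^ 2) := by
    rw [norm2_sq' (X *ᵥ u), hun]; norm_num
  have valv : (∑ i, (X *ᵥ v) i ^ 2) / (n:ℝ)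
      = norm2 (X *ᵥ v) ^ 2 / ((n:ℝ) * norm2 v ^ 2) := by
    rw [norm2_sq' (X *ᵥ v), hvn]; norm_num
  have hQuI : (∑ i, (X *ᵥ u) i ^ 2) / (n:ℝ) ≤ rhoPlusF X I := by
    simp only [rhoPlusF]
    exact le_csSup (bddAbove_rho n p X I) ⟨u, hu0, hu, valu⟩
  have hQvJ : (∑ i, (X *ᵥ v) i ^ 2) / (n:ℝ) ≤ rhoPlusF X J := by
    simp only [rhoPlusF]
    exact le_csSup (bddAbove_rho n p X J) ⟨v, hv0, hv, valv⟩
  have hmu : rhoMinusF X (I ∪ J) ≤ (∑ i, (X *ᵥ u) i ^ 2) / (n:ℝ) := by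
    simp only [rhoMinusF]
    exact csInf_le (bddBelow_rho n p X (I ∪ J))
      ⟨u, hu0, fun i hi => hu i (fun h => hi (Finset.mem_union_left _ h)), valu⟩
  have hmv : rhoMinusF X (I ∪ J) ≤ (∑ i, (X *ᵥ v) i ^ 2) / (n:ℝ) := by
    simp only [rhoMinusF]
    exact csInf_le (bddBelow_rho n p X (I ∪ J))
      ⟨v, hv0, fun i hi => hv i (fun h => hi (Finset.mem_union_right _ h)), valv⟩
  have ha : 0 ≤ rhoPlusF X I - rhoMinusF X (I ∪ J) := by linarith
  have hb : 0 ≤ rhoPlusF X J - rhoMinusF X (I ∪ J) := by linarith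
  have huv0 : ∑ i, u i * v i = 0 := Finset.sum_eq_zero fun i _ => by
    by_cases hi : i ∈ I
    · rw [hv i (Finset.disjoint_left.mp hIJ hi), mul_zero]
    · rw [hu i hi, zero_mul]
  have main : ∀ s x y : ℝ, s = 1 ∨ s = -1 → 0 < x → 0 < y →
      (n:ℝ) * (x^2 + y^2) * rhoMinusF X (I ∪ J)
        ≤ x^2 * (∑ i, (X *ᵥ u) i ^ 2) + y^2 * (∑ i, (X *ᵥ v) i ^ 2)
          + 2*x*(s*y)*(∑ i, (X *ᵥ u) i * (X *ᵥ v) i) := by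
    intro s x y hs hx hy
    have hs2 : s^2 = 1 := by rcases hs with h|h <;> rw [h] <;> norm_num
    set β : Fin p → ℝ := x • u + (s*y) • v with hβdef
    have hβi : ∀ i, β i = x * u i + (s*y) * v i := fun i => rfl
    have hβn : norm2 β ^ 2 = x^2 + y^2 := by
      rw [norm2_sq']
      calc ∑ i, β i ^ 2 = ∑ i, (x * u i + (s*y) * v i) ^ 2 := rfl
        _ = x^2*(∑ i, u i^2) + (s*y)^2*(∑ i, v i^2) + 2*x*(s*y)*(∑ i, u i * v i) :=
            sum_expand' u v x (s*y)
        _ = x^2 + y^2 := by rw [hun2, hvn2, huv0, mul_pow, hs2]; ring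
    have hβ0 : β ≠ 0 := by
      intro h
      rw [h] at hβn
      have hz : norm2 (0 : Fin p → ℝ) = 0 := by simp [norm2]
      rw [hz] at hβn
      nlinarith
    have hsupp : ∀ i ∉ I ∪ J, β i = 0 := fun i hi => by
      rw [hβi i, hu i (fun h => hi (Finset.mem_union_left _ h)),
        hv i (fun h => hi (Finset.mem_union_right _ h))]
      ring
    have hXβ : X *ᵥ β = x • (X *ᵥ u) + (s*y) • (X *ᵥ v) := by
      rw [hβdef, Matrix.mulVec_add, Matrix.mulVec_smul, Matrix.mulVec_smul]
    have hQβ : norm2 (X *ᵥ β) ^ 2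
        = x^2*(∑ i, (X *ᵥ u) i ^ 2) + y^2*(∑ i, (X *ᵥ v) i ^ 2)
          + 2*x*(s*y)*(∑ i, (X *ᵥ u) i * (X *ᵥ v) i) := by
      rw [norm2_sq', hXβ]
      calc ∑ i, (x • (X *ᵥ u) + (s*y) • (X *ᵥ v)) i ^ 2
          = ∑ i, (x * (X *ᵥ u) i + (s*y) * (X *ᵥ v) i) ^ 2 := rfl
        _ = x^2*(∑ i, (X *ᵥ u) i^2) + (s*y)^2*(∑ i, (X *ᵥ v) i^2)
            + 2*x*(s*y)*(∑ i, (X *ᵥ u) i * (X *ᵥ v) i) := sum_expand' _ _ x (s*y)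
        _ = _ := by rw [mul_pow, hs2]; ring
    have hmem : rhoMinusF X (I ∪ J) ≤ norm2 (X *ᵥ β) ^ 2 / ((n:ℝ) * norm2 β ^ 2) := by
      simp only [rhoMinusF]
      exact csInf_le (bddBelow_rho n p X (I ∪ J)) ⟨β, hβ0, hsupp, rfl⟩
    rw [hβn, hQβ] at hmem
    have hd : (0:ℝ) < (n:ℝ) * (x^2 + y^2) := by positivity
    rw [le_div_iff₀ hd] at hmem
    linarith [hmem]
  rw [hB]
  apply key_abs' _ _ _ ha hb
  intro x y hx hy
  have h1 := main 1 x y (Or.inl rfl) hx hy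
  have h2 := main (-1) x y (Or.inr rfl) hx hy
  have hQu' : (∑ i, (X *ᵥ u) i ^ 2) ≤ rhoPlusF X I * (n:ℝ) := by
    rw [← div_le_iff₀ hnr] at *
    exact hQuI
  have hQv' : (∑ i, (X *ᵥ v) i ^ 2) ≤ rhoPlusF X J * (n:ℝ) := by
    rw [← div_le_iff₀ hnr] at *
    exact hQvJ
  have habs : |1/(n:ℝ) * ∑ i, (X *ᵥ u) i * (X *ᵥ v) i|
      = |∑ i, (X *ᵥ u) i * (X *ᵥ v) i| / (n:ℝ) := by
    rw [abs_mul, abs_of_pos (show (0:ℝ) < 1/(n:ℝ) by positivity)]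
    ring
  rw [habs, show 2*(x*y)*((|∑ i, (X *ᵥ u) i * (X *ᵥ v) i|)/(n:ℝ))
      = (2*(x*y)*|∑ i, (X *ᵥ u) i * (X *ᵥ v) i|)/(n:ℝ) from by ring,
    div_le_iff₀ hnr]
  have t1 : x^2*(∑ i, (X *ᵥ u) i ^ 2) ≤ x^2*(rhoPlusF X I * (n:ℝ)) :=
    mul_le_mul_of_nonneg_left hQu' (sq_nonneg x)
  have t2 : y^2*(∑ i, (X *ᵥ v) i ^ 2) ≤ y^2*(rhoPlusF X J * (n:ℝ)) :=
    mul_le_mul_of_nonneg_left hQv' (sq_nonneg y)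
  rcases abs_cases (∑ i, (X *ᵥ u) i * (X *ᵥ v) i) with ⟨he, -⟩ | ⟨he, -⟩ <;>
    rw [he] <;> nlinarith [h1, h2, t1, t2]
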